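/- Let x : ℕ → ℕ be superadditive with x(n) ≥ 1 for all n ≥ 1, let y : ℕ → ℕ satisfy y(n) ≥ 1 for all n ≥ 1, and let (B_n)_{n≥0} be the factorial set associated with (x, y). If n! divides B_n for every n ≥ 0, then the function n ↦ B_n is a generalized factorial. -/

import Mathlib

/-- A function `f : ℕ → ℕ` is a generalized factorial if `f 0 = 1`, `f n ≥ 1` for all `n`,
`f k * f (n - k)` divides `f n` for all `0 ≤ k ≤ n`, and `n !` divides `f n` for all `n`. -/
def IsGenFactorial (f : ℕ → ℕ) : Prop :=
  f 0 = 1 ∧ (∀ n, 1 ≤ f n) ∧ (∀ n k, k ≤ n → f k * f (n - k) ∣ f n) ∧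
    (∀ n, Nat.factorial n ∣ f n)

theorem stmt_6 (x y : ℕ → ℕ)
    (hsuper : ∀ m n, 1 ≤ m → 1 ≤ n → x m + x n ≤ x (m + n))
    (hx : ∀ n, 1 ≤ n → 1 ≤ x n) (hy : ∀ n, 1 ≤ n → 1 ≤ y n)
    (B : ℕ → ℕ) (hB : ∀ n, B n = ∏ k ∈ Finset.Icc 1 n, y k ^ x (n / k))
    (hfac : ∀ n, Nat.factorial n ∣ B n) :
    IsGenFactorial B := by
  -- monotonicity of x on positive arguments
  have hmono : ∀ a b : ℕ, 1 ≤ a → a ≤ b → x a ≤ x b := by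
    intro a b ha hab
    rcases eq_or_lt_of_le hab with rfl | h
    · exact le_refl _
    · have hba : b = a + (b - a) := by omega
      calc x a ≤ x a + x (b - a) := Nat.le_add_right _ _
        _ ≤ x (a + (b - a)) := hsuper a (b - a) ha (by omega)
        _ = x b := by rw [← hba]
  refine ⟨?_, ?_, ?_, hfac⟩
  · rw [hB 0]; simp
  · intro n
    rw [hB n]
    apply Finset.one_le_prod'
    intro i hi
    simp only [Finset.mem_Icc] at hi
    exact Nat.one_le_pow _ _ (hy i hi.1)
  · intro n k hkn
    -- extend products to Icc 1 n
    have key : ∀ c : ℕ, c ≤ n →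
        B c = ∏ i ∈ Finset.Icc 1 n, (if i ≤ c then y i ^ x (c / i) else 1) := by
      intro c hc
      rw [hB c]
      calc ∏ i ∈ Finset.Icc 1 c, y i ^ x (c / i)
          = ∏ i ∈ Finset.Icc 1 c, (if i ≤ c then y i ^ x (c / i) else 1) :=
            Finset.prod_congr rfl (fun i hi => by
              simp only [Finset.mem_Icc] at hi; rw [if_pos hi.2])
        _ = ∏ i ∈ Finset.Icc 1 n, (if i ≤ c then y i ^ x (c / i) else 1) :=
            Finset.prod_subset (Finset.Icc_subset_Icc_right hc) (fun i hi hni => by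
              simp only [Finset.mem_Icc] at hi hni
              rw [if_neg (by omega)])
    rw [key k hkn, key (n - k) (by omega), hB n, ← Finset.prod_mul_distrib]
    apply Finset.prod_dvd_prod_of_dvd
    intro i hi
    simp only [Finset.mem_Icc] at hi
    obtain ⟨hi1, hin⟩ := hi
    have hdivle : k / i + (n - k) / i ≤ n / i := by
      rw [Nat.le_div_iff_mul_le (by omega : 0 < i), add_mul]
      have h1 := Nat.div_mul_le_self k i
      have h2 := Nat.div_mul_le_self (n - k) i
      omega
    by_cases h1 : i ≤ k <;> by_cases h2 : i ≤ n - k <;>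
      simp only [if_pos, if_neg, h1, h2, if_true, if_false, mul_one, one_mul]
    · rw [← pow_add]
      apply pow_dvd_pow
      calc x (k / i) + x ((n - k) / i)
          ≤ x (k / i + (n - k) / i) :=
            hsuper _ _ (Nat.one_le_div_iff (by omega) |>.2 h1)
              (Nat.one_le_div_iff (by omega) |>.2 h2)
        _ ≤ x (n / i) := hmono _ _
            (le_trans (Nat.one_le_div_iff (by omega) |>.2 h1) (Nat.le_add_right _ _)) hdivle
    · exact pow_dvd_pow _ (hmono _ _ (Nat.one_le_div_iff (by omega) |>.2 h1)
        (Nat.div_le_div_right hkn))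
    · exact pow_dvd_pow _ (hmono _ _ (Nat.one_le_div_iff (by omega) |>.2 h2)
        (Nat.div_le_div_right (by omega)))
    · exact one_dvd _
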